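/- Let f: ℕ₀ → ℂ be such that f̃(z) = ∑_{n=0}^∞ f(n) z^n converges for |z| < 1, and define S(t)f(n) = e^{-tn} ∑_{j=n}^∞ C(j,n)(1-e^{-t})^{j-n} f(j). Then for every t > 0 and |z| < 1, ∑_{n=0}^∞ S(t)f(n) z^n = f̃(e^{-t}(z-1) + 1). -/

import Mathlib

/-- Helper: sum over antidiagonal. -/
lemma antidiag_sum {R : Type*} [CommSemiring R] (g : ℕ → R) (x y : R) (n : ℕ) :
    ∑ p ∈ Finset.HasAntidiagonal.antidiagonal n,
      ((p.1 + p.2).choose p.1 : R) * x ^ p.1 * y ^ p.2 * g (p.1 + p.2)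
      = g n * (x + y) ^ n := by
  rw [(Commute.all x y).add_pow', Finset.mul_sum]
  refine Finset.sum_congr rfl fun p hp => ?_
  rw [Finset.HasAntidiagonal.mem_antidiagonal] at hp
  rw [hp, nsmul_eq_mul]
  ring



/-- The one-parameter family `S(t)` on sequences. -/
noncomputable def Sop (t : ℝ) (f : ℕ → ℂ) (n : ℕ) : ℂ :=
  (Real.exp (-t)) ^ n *
    ∑' i : ℕ, ((n + i).choose n : ℂ) * (1 - (Real.exp (-t) : ℂ)) ^ i * f (n + i)

/-- Z-transform of the semigroup `S(t)`. -/
theorem stmt15 (f : ℕ → ℂ)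
    (hf : ∀ r : ℝ, 0 ≤ r → r < 1 → Summable (fun n : ℕ => ‖f n‖ * r ^ n))
    (t : ℝ) (ht : 0 < t) (z : ℂ) (hz : ‖z‖ < 1) :
    HasSum (fun n : ℕ => Sop t f n * z ^ n)
      (∑' n : ℕ, f n * ((Real.exp (-t) : ℂ) * (z - 1) + 1) ^ n) := by
  set a : ℝ := Real.exp (-t) with ha_def
  have ha0 : 0 < a := Real.exp_pos _
  have ha1 : a < 1 := by
    rw [ha_def]
    exact Real.exp_lt_one_iff.mpr (by linarith)
  set r : ℝ := a * ‖z‖ + (1 - a) with hr_def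
  have hr0 : 0 ≤ r :=
    add_nonneg (mul_nonneg ha0.le (norm_nonneg z)) (by linarith)
  have hr1 : r < 1 := by
    have := norm_nonneg z
    nlinarith
  set F : ℕ × ℕ → ℂ := fun p =>
    ((p.1 + p.2).choose p.1 : ℂ) * ((a : ℂ) * z) ^ p.1 * (1 - (a : ℂ)) ^ p.2 *
      f (p.1 + p.2) with hF_def
  have h1a : (1 : ℂ) - (a : ℂ) = ((1 - a : ℝ) : ℂ) := by push_cast; ring
  have hnorm : ∀ p : ℕ × ℕ, ‖F p‖ =
      ((p.1 + p.2).choose p.1 : ℝ) * (a * ‖z‖) ^ p.1 * (1 - a) ^ p.2 *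
        ‖f (p.1 + p.2)‖ := by
    intro p
    simp only [hF_def, norm_mul, norm_pow, h1a,
      Complex.norm_natCast, Complex.norm_real, Real.norm_eq_abs]
    rw [abs_of_nonneg ha0.le, abs_of_nonneg (by linarith : (0:ℝ) ≤ 1 - a)]
  -- summability of norms
  have hFnorm : Summable (fun p : ℕ × ℕ => ‖F p‖) := by
    rw [← Finset.HasAntidiagonal.sigmaAntidiagonalEquivProd.summable_iff]
    apply (summable_sigma_of_nonneg (fun x => norm_nonneg _)).mpr
    refine ⟨fun n => (hasSum_fintype _).summable, ?_⟩
    have key : ∀ n : ℕ,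
        (∑' c : (Finset.HasAntidiagonal.antidiagonal n : Finset (ℕ × ℕ)),
          ‖F (c : ℕ × ℕ)‖) = ‖f n‖ * r ^ n := by
      intro n
      rw [tsum_fintype, Finset.sum_coe_sort (Finset.HasAntidiagonal.antidiagonal n) (fun p => ‖F p‖)]
      calc ∑ p ∈ Finset.HasAntidiagonal.antidiagonal n, ‖F p‖
          = ∑ p ∈ Finset.HasAntidiagonal.antidiagonal n,
              ((p.1 + p.2).choose p.1 : ℝ) * (a * ‖z‖) ^ p.1 *
                (1 - a) ^ p.2 * ‖f (p.1 + p.2)‖ :=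
            Finset.sum_congr rfl fun p _ => hnorm p
        _ = ‖f n‖ * r ^ n := antidiag_sum (fun m => ‖f m‖) (a * ‖z‖) (1 - a) n
    have := (hf r hr0 hr1)
    exact Summable.congr this fun n => (key n).symm ▸ rfl
  have hF : Summable F := Summable.of_norm hFnorm
  -- row sums give the LHS
  have hrow : HasSum (fun n : ℕ => Sop t f n * z ^ n) (∑' p, F p) := by
    refine HasSum.prod_fiberwise hF.hasSum fun n => ?_
    have hval : Sop t f n * z ^ n = ∑' i, F (n, i) := by
      have hterm : ∀ i : ℕ, F (n, i) =
          ((a : ℂ) * z) ^ n * (((n + i).choose n : ℂ) * (1 - (a : ℂ)) ^ i * f (n + i)) := by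
        intro i; simp only [hF_def]; ring
      rw [tsum_congr hterm, tsum_mul_left, mul_pow]
      simp only [Sop, ← ha_def]
      ring
    exact hval ▸ (hF.prod_factor n).hasSum
  -- diagonal sums give the RHS
  have hdiag : HasSum (fun n : ℕ => f n * ((a : ℂ) * (z - 1) + 1) ^ n) (∑' p, F p) := by
    have he : HasSum (F ∘ Finset.HasAntidiagonal.sigmaAntidiagonalEquivProd) (∑' p, F p) :=
      (Equiv.hasSum_iff _).mpr hF.hasSum
    refine he.sigma fun n => ?_
    have h2 : (∑ c ∈ Finset.HasAntidiagonal.antidiagonal n, F c) = f n * ((a : ℂ) * (z - 1) + 1) ^ n := by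
      have := antidiag_sum f ((a : ℂ) * z) (1 - (a : ℂ)) n
      simp only [hF_def]
      rw [this]
      ring_nf
    exact h2 ▸ (Finset.HasAntidiagonal.antidiagonal n).hasSum F
  rw [show ((Real.exp (-t) : ℂ)) = (a : ℂ) from rfl]
  rw [hdiag.tsum_eq]
  exact hrow
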